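/- Let l ≥ 1 and let p₁, …, p_l be pairwise coprime integers with each p_i ≥ 2, and let integers (e₀, p₁', …, p_l') satisfy e₀·p₁⋯p_l + ∑_{i=1}^{l} p_i'·∏_{j≠i} p_j = −1 with 1 ≤ p_i' ≤ p_i − 1 for every i. Then e₀ < 0, and for every integer k, Δ(k·p₁⋯p_l) = k + 1, where Δ(n) = 1 + |e₀|·n − ∑_{i=1}^{l} ⌈n·p_i'/p_i⌉ and ⌈·⌉ denotes the ceiling of a rational number. -/
import Mathlib


/-- Let `l ≥ 1` and let `p₁, …, p_l` be pairwise coprime integers with each `p_i ≥ 2`,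
and let integers `(e₀, p₁', …, p_l')` satisfy the Diophantine equation
`e₀·p₁⋯p_l + ∑_i p_i'·∏_{j≠i} p_j = −1` with `1 ≤ p_i' ≤ p_i − 1`. Then `e₀ < 0`, and
for every integer `k`, `Δ(k·p₁⋯p_l) = k + 1`, where
`Δ(n) = 1 + |e₀|·n − ∑_{i=1}^{l} ⌈n·p_i'/p_i⌉`. -/
theorem stmt6 (l : ℕ) (hl : 1 ≤ l) (p : Fin l → ℤ)
    (hp2 : ∀ i, 2 ≤ p i)
    (hcop : ∀ i j : Fin l, i ≠ j → Int.gcd (p i) (p j) = 1)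
    (e₀ : ℤ) (p' : Fin l → ℤ)
    (heq : e₀ * ∏ j, p j + ∑ i, p' i * ∏ j ∈ Finset.univ.erase i, p j = -1)
    (hp' : ∀ i, 1 ≤ p' i ∧ p' i ≤ p i - 1) :
    e₀ < 0 ∧
    ∀ k : ℤ,
      1 + |e₀| * (k * ∏ j, p j)
        - ∑ i, ⌈(((k * ∏ j, p j) * p' i : ℤ) : ℚ) / ((p i : ℤ) : ℚ)⌉ = k + 1 := by
  have hppos : ∀ i, (0:ℤ) < p i := fun i => lt_of_lt_of_le (by norm_num) (hp2 i)
  have hPpos : 0 < ∏ j, p j := Finset.prod_pos (fun i _ => hppos i)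
  have hne : (Finset.univ : Finset (Fin l)).Nonempty := by
    haveI : NeZero l := ⟨by omega⟩
    exact Finset.univ_nonempty
  have hSpos : 0 < ∑ i, p' i * ∏ j ∈ Finset.univ.erase i, p j := by
    apply Finset.sum_pos (fun i _ => mul_pos (lt_of_lt_of_le one_pos (hp' i).1)
      (Finset.prod_pos (fun j _ => hppos j))) hne
  have he₀ : e₀ < 0 := by
    by_contra h
    push_neg at h
    nlinarith
  refine ⟨he₀, fun k => ?_⟩
  have hceil : ∀ i, ⌈(((k * ∏ j, p j) * p' i : ℤ) : ℚ) / ((p i : ℤ) : ℚ)⌉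
      = k * p' i * ∏ j ∈ Finset.univ.erase i, p j := by
    intro i
    have hdvd : p i ∣ (k * ∏ j, p j) * p' i :=
      ⟨k * p' i * ∏ j ∈ Finset.univ.erase i, p j, by
        rw [← Finset.mul_prod_erase _ _ (Finset.mem_univ i)]; ring⟩
    rw [← Int.cast_div_charZero hdvd, Int.ceil_intCast]
    obtain ⟨c, hc⟩ := hdvd
    rw [hc, Int.mul_ediv_cancel_left _ (hppos i).ne']
    have : p i * c = p i * (k * p' i * ∏ j ∈ Finset.univ.erase i, p j) := by
      rw [← hc, ← Finset.mul_prod_erase _ _ (Finset.mem_univ i)]; ring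
    exact mul_left_cancel₀ (hppos i).ne' this
  rw [Finset.sum_congr rfl (fun i _ => hceil i), abs_of_neg he₀]
  have : ∑ i, k * p' i * ∏ j ∈ Finset.univ.erase i, p j
      = k * ∑ i, p' i * ∏ j ∈ Finset.univ.erase i, p j := by
    rw [Finset.mul_sum]; exact Finset.sum_congr rfl (fun i _ => by ring)
  rw [this]
  have hS : ∑ i, p' i * ∏ j ∈ Finset.univ.erase i, p j = -1 - e₀ * ∏ j, p j := by linarith
  rw [hS]; ring
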